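/- arXiv:1310.3843 — 5 statements merged into one kernel-verified Lean document; each statement's English description precedes it below -/
import Mathlib

section
/- For all x ≥ e, the principal branch of the Lambert W function satisfies x·e/ln(x) ≤ e^{W(x)+1} ≤ (x/ln(x))·(1+e). -/
/-- For all `x ≥ e`, the principal branch of the Lambert W function
(on `[0,∞)`, the unique `y ≥ 0` with `y e^y = x`) satisfies
`x e / ln x ≤ e^{W(x)+1} ≤ (x / ln x) (1 + e)`. -/
theorem stmt_2 (W : ℝ → ℝ)
    (hW : ∀ x ≥ (0 : ℝ), 0 ≤ W x ∧ W x * Real.exp (W x) = x) :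
    ∀ x ≥ Real.exp 1,
      x * Real.exp 1 / Real.log x ≤ Real.exp (W x + 1) ∧
        Real.exp (W x + 1) ≤ x / Real.log x * (1 + Real.exp 1) := by
  intro x hx
  have he : (0:ℝ) < Real.exp 1 := Real.exp_pos 1
  have hx0 : (0:ℝ) < x := lt_of_lt_of_le he hx
  obtain ⟨hw0, hwx⟩ := hW x (le_of_lt hx0)
  set w := W x with hw
  -- w ≥ 1
  have hw1 : 1 ≤ w := by
    by_contra h
    push_neg at h
    have h1 : Real.exp w ≤ Real.exp 1 := Real.exp_le_exp.mpr h.le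
    have : w * Real.exp w < Real.exp 1 := by
      calc w * Real.exp w ≤ w * Real.exp 1 := by
            exact mul_le_mul_of_nonneg_left h1 hw0
        _ < 1 * Real.exp 1 := by nlinarith
        _ = Real.exp 1 := one_mul _
    rw [hwx] at this
    linarith
  have hwpos : (0:ℝ) < w := lt_of_lt_of_le one_pos hw1
  -- log x = log w + w
  have hlog : Real.log x = Real.log w + w := by
    rw [← hwx, Real.log_mul (ne_of_gt hwpos) (ne_of_gt (Real.exp_pos w)),
      Real.log_exp]
  have hlogw0 : 0 ≤ Real.log w := Real.log_nonneg hw1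
  have hlogx : 0 < Real.log x := by rw [hlog]; linarith
  have hexp : Real.exp (w + 1) = Real.exp 1 * x / w := by
    rw [Real.exp_add, ← hwx]
    field_simp
  constructor
  · rw [hexp, div_le_div_iff₀ hlogx hwpos]
    have : w ≤ Real.log x := by rw [hlog]; linarith
    nlinarith [mul_pos hx0 he]
  · rw [hexp, div_mul_eq_mul_div, div_le_div_iff₀ hwpos hlogx]
    -- need e * x * log x ≤ x*(1+e)*w, i.e. e*(log w + w) ≤ (1+e)*w, i.e. e*log w ≤ w
    have hkey : Real.exp 1 * Real.log w ≤ w := by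
      have h2 : Real.log (w / Real.exp 1) ≤ w / Real.exp 1 - 1 :=
        Real.log_le_sub_one_of_pos (by positivity)
      rw [Real.log_div (ne_of_gt hwpos) (ne_of_gt he), Real.log_exp] at h2
      have : Real.log w ≤ w / Real.exp 1 := by linarith
      calc Real.exp 1 * Real.log w ≤ Real.exp 1 * (w / Real.exp 1) :=
            mul_le_mul_of_nonneg_left this he.le
        _ = w := by field_simp
    rw [hlog]
    nlinarith [mul_pos hx0 he, mul_le_mul_of_nonneg_left hkey hx0.le]
end

section
/- Fix K ≥ 1, T > K, ρ > 0, A > 0, η ∈ (0,1], nonnegative coefficients C_{i,0} (i=0..3) and C_{i,1} (i=0..2) with at least C_{0,1} > 0. Define EE(M) = K(1-K/T)·log₂(1+ρ(M-K)) / (ρKA/η + Σ_{i=0}^{3} C_{i,0}K^i + (Σ_{i=0}^{2} C_{i,1}K^i)·M) for real M ≥ K. Then EE is strictly quasiconcave on [K,∞), equals 0 at M = K, tends to 0 as M → ∞, and attains its unique maximum at M* = (e^{W(x₀)+1} + Kρ - 1)/ρ where x₀ = (ρ²KA/η + ρΣ_i C_{i,0}K^i)/(e·Σ_i C_{i,1}K^i)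 + (Kρ-1)/e. -/
open Filter Real

theorem aux_convex (a b k ρ K : ℝ) (ha : 0 < a) (hb : 0 < b) (hk : 0 < k)
    (hρ : 0 < ρ) (hK : 0 < K) (α : ℝ) :
    Convex ℝ {M : ℝ | K ≤ M ∧ α ≤ k * (Real.log (1 + ρ * (M - K)) / (a + b * M))} := by
  intro x hx y hy p q hp hq hpq
  simp only [Set.mem_setOf_eq, smul_eq_mul] at *
  obtain ⟨hxK, hxα⟩ := hx
  obtain ⟨hyK, hyα⟩ := hy
  have hzK : K ≤ p * x + q * y := by nlinarith
  refine ⟨hzK, ?_⟩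
  have hDx : 0 < a + b * x := by nlinarith
  have hDy : 0 < a + b * y := by nlinarith
  have hDz : 0 < a + b * (p * x + q * y) := by nlinarith
  have htx : (0:ℝ) < 1 + ρ * (x - K) := by nlinarith
  have hty : (0:ℝ) < 1 + ρ * (y - K) := by nlinarith
  have h1 : α * (a + b * x) ≤ k * Real.log (1 + ρ * (x - K)) := by
    rw [← mul_div_assoc] at hxα; exact (le_div_iff₀ hDx).mp hxα
  have h2 : α * (a + b * y) ≤ k * Real.log (1 + ρ * (y - K)) := by
    rw [← mul_div_assoc] at hyα; exact (le_div_iff₀ hDy).mp hyα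
  have hconc := (strictConcaveOn_log_Ioi.concaveOn).2 (Set.mem_Ioi.mpr htx)
    (Set.mem_Ioi.mpr hty) hp hq hpq
  simp only [smul_eq_mul] at hconc
  have heq : p * (1 + ρ * (x - K)) + q * (1 + ρ * (y - K)) = 1 + ρ * (p * x + q * y - K) := by
    linear_combination (1 - ρ * K) * hpq
  rw [heq] at hconc
  rw [← mul_div_assoc, le_div_iff₀ hDz]
  calc α * (a + b * (p * x + q * y))
      = p * (α * (a + b * x)) + q * (α * (a + b * y)) := by linear_combination α * a * hpq.symm
    _ ≤ p * (k * Real.log (1 + ρ * (x - K))) + q * (k * Real.log (1 + ρ * (y - K))) := by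
        gcongr
    _ = k * (p * Real.log (1 + ρ * (x - K)) + q * Real.log (1 + ρ * (y - K))) := by ring
    _ ≤ k * Real.log (1 + ρ * (p * x + q * y - K)) := by
        exact mul_le_mul_of_nonneg_left hconc hk.le

theorem aux_tendsto (a b k ρ K : ℝ) (ha : 0 < a) (hb : 0 < b) (hρ : 0 < ρ) (hK : 0 < K) :
    Tendsto (fun M : ℝ => k * (Real.log (1 + ρ * (M - K)) / (a + b * M))) atTop (nhds 0) := by
  have h1 : Tendsto (fun M : ℝ => ρ * M) atTop atTop :=
    Filter.Tendsto.const_mul_atTop hρ Filter.tendsto_id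
  have hv : Tendsto (fun M : ℝ => 1 + ρ * (M - K)) atTop atTop := by
    have h2 := Filter.tendsto_atTop_add_const_right atTop (1 - ρ * K) h1
    exact h2.congr (fun x => by ring)
  have hlo : (fun M : ℝ => Real.log (1 + ρ * (M - K))) =o[atTop]
      (fun M : ℝ => 1 + ρ * (M - K)) := by
    simpa [Function.comp_def] using Real.isLittleO_log_id_atTop.comp_tendsto hv
  have hOB : (fun M : ℝ => 1 + ρ * (M - K)) =O[atTop] (fun M : ℝ => a + b * M) := by
    rw [Asymptotics.isBigO_iff]
    refine ⟨ρ / b + 1 / a, ?_⟩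
    filter_upwards [Filter.eventually_ge_atTop (max K 0)] with M hM
    have hM0 : (0:ℝ) ≤ M := le_trans (le_max_right _ _) hM
    have hMK : K ≤ M := le_trans (le_max_left _ _) hM
    have hv1 : (0:ℝ) < 1 + ρ * (M - K) := by nlinarith
    have hv2 : (0:ℝ) < a + b * M := by nlinarith
    rw [Real.norm_eq_abs, Real.norm_eq_abs, abs_of_pos hv1, abs_of_pos hv2]
    have expand : (ρ / b + 1 / a) * (a + b * M) = ρ / b * a + ρ * M + 1 + 1 / a * (b * M) := by
      field_simp
      ring
    rw [expand]
    have p1 : 0 ≤ ρ / b * a := mul_nonneg (div_nonneg hρ.le hb.le) ha.le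
    have p2 : 0 ≤ 1 / a * (b * M) :=
      mul_nonneg (div_nonneg zero_le_one ha.le) (mul_nonneg hb.le hM0)
    nlinarith [mul_nonneg hρ.le hM0, mul_nonneg hρ.le hK.le]
  have hdiv := (hlo.trans_isBigO hOB).tendsto_div_nhds_zero
  simpa using hdiv.const_mul k

theorem aux_max (a b k ρ K w : ℝ) (ha : 0 < a) (hb : 0 < b) (hk : 0 < k)
    (hρ : 0 < ρ) (hK : 0 < K) (hw : -1 < w)
    (hq : b * w * Real.exp (w + 1) = ρ * a + b * (K * ρ - 1)) :
    ∀ M : ℝ, K ≤ M → M ≠ (Real.exp (w + 1) + K * ρ - 1) / ρ →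
      k * (Real.log (1 + ρ * (M - K)) / (a + b * M)) <
      k * (Real.log (1 + ρ * ((Real.exp (w + 1) + K * ρ - 1) / ρ - K)) /
        (a + b * ((Real.exp (w + 1) + K * ρ - 1) / ρ))) := by
  intro M hM hne
  set s := Real.exp (w + 1) with hs_def
  have hs0 : 0 < s := Real.exp_pos _
  have hlogs : Real.log s = w + 1 := Real.log_exp _
  have hs1 : 1 < s := by
    calc (1:ℝ) = Real.exp 0 := Real.exp_zero.symm
      _ < Real.exp (w + 1) := Real.exp_lt_exp.mpr (by linarith)
  have hMsub : ρ * ((s + K * ρ - 1) / ρ - K) = s - 1 := by field_simp; ring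
  have hMstar' : 1 + ρ * ((s + K * ρ - 1) / ρ - K) = s := by rw [hMsub]; ring
  rw [hMstar']
  set t := 1 + ρ * (M - K) with ht_def
  have ht1 : 1 ≤ t := by nlinarith [mul_nonneg hρ.le (sub_nonneg.mpr hM)]
  have htpos : 0 < t := by linarith
  have htne : t ≠ s := by
    intro h
    apply hne
    rw [eq_div_iff hρ.ne']
    rw [ht_def] at h
    linarith [h]
  have hDm : 0 < a + b * M := by nlinarith
  have hKs : K ≤ (s + K * ρ - 1) / ρ := by rw [le_div_iff₀ hρ]; nlinarith
  have hDs : 0 < a + b * ((s + K * ρ - 1) / ρ) := by nlinarith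
  have hrDm : ρ * (a + b * M) = b * (w * s + t) := by rw [ht_def]; linear_combination -hq
  have hrDs : ρ * (a + b * ((s + K * ρ - 1) / ρ)) = b * (w * s + s) := by
    field_simp
    linear_combination -hq
  have hxne : t / s ≠ 1 := fun h => htne (by rwa [div_eq_iff hs0.ne', one_mul] at h)
  have hlog := Real.log_lt_sub_one_of_pos (div_pos htpos hs0) hxne
  rw [Real.log_div htpos.ne' hs0.ne'] at hlog
  have h4 : s * (t / s) = t := by field_simp
  have h5 : s * Real.log t < s * Real.log s - s + t := by
    nlinarith [mul_lt_mul_of_pos_left hlog hs0]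
  rw [hlogs] at h5
  have h6 : s * Real.log t < w * s + t := by nlinarith
  have hbw : 0 < b * (w + 1) := by nlinarith
  have h7 := mul_lt_mul_of_pos_left h6 hbw
  apply mul_lt_mul_of_pos_left _ hk
  rw [div_lt_div_iff₀ hDm hDs]
  have h8 : Real.log t * (a + b * ((s + K * ρ - 1) / ρ)) * ρ <
      Real.log s * (a + b * M) * ρ := by
    rw [hlogs]
    calc Real.log t * (a + b * ((s + K * ρ - 1) / ρ)) * ρ
        = b * (w + 1) * (s * Real.log t) := by linear_combination Real.log t * hrDs
      _ < b * (w + 1) * (w * s + t) := h7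
      _ = (w + 1) * (a + b * M) * ρ := by linear_combination -(w + 1) * hrDm
  exact lt_of_mul_lt_mul_right h8 hρ.le

/-- With `K ≥ 1`, `T > K`, `ρ > 0`, `A > 0`, `η ∈ (0,1]`, nonnegative
circuit coefficients `C0 i` (i = 0..3) and `C1 i` (i = 0..2) with `C1 0 > 0`
(i.e. `C_{0,1} > 0`), the ZF energy efficiency
`EE M = K (1-K/T) log₂(1+ρ(M-K)) / (ρKA/η + Σᵢ C0 i Kⁱ + (Σᵢ C1 i Kⁱ) M)`
is strictly quasiconcave on `[K,∞)`, equals 0 at `M = K`, tends to 0 as `M → ∞`,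
and attains its unique maximum at `M* = (e^{W(x₀)+1} + Kρ - 1)/ρ`, where `w = W(x₀)`
is the principal Lambert W value at
`x₀ = (ρ²KA/η + ρ Σᵢ C0 i Kⁱ)/(e Σᵢ C1 i Kⁱ) + (Kρ-1)/e`. -/
theorem stmt_4 (K T ρ A η : ℝ) (C0 : ℕ → ℝ) (C1 : ℕ → ℝ) (w : ℝ)
    (hK : 1 ≤ K) (hT : K < T) (hρ : 0 < ρ) (hA : 0 < A) (hη : 0 < η) (hη1 : η ≤ 1)
    (hC0 : ∀ i, 0 ≤ C0 i) (hC1 : ∀ i, 0 ≤ C1 i) (hC01 : 0 < C1 0)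
    (hw1 : w * Real.exp w =
      (ρ ^ 2 * K * A / η + ρ * ∑ i ∈ Finset.range 4, C0 i * K ^ i) /
        (Real.exp 1 * ∑ i ∈ Finset.range 3, C1 i * K ^ i) +
        (K * ρ - 1) / Real.exp 1)
    (hw2 : -1 ≤ w) :
    let EE : ℝ → ℝ := fun M =>
      K * (1 - K / T) * Real.logb 2 (1 + ρ * (M - K)) /
        (ρ * K * A / η + (∑ i ∈ Finset.range 4, C0 i * K ^ i) +
          (∑ i ∈ Finset.range 3, C1 i * K ^ i) * M)
    let Mstar : ℝ := (Real.exp (w + 1) + K * ρ - 1) / ρ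
    (∀ α : ℝ, Convex ℝ {M : ℝ | K ≤ M ∧ α ≤ EE M}) ∧
      EE K = 0 ∧
      Filter.Tendsto EE Filter.atTop (nhds 0) ∧
      K ≤ Mstar ∧
      ∀ M : ℝ, K ≤ M → M ≠ Mstar → EE M < EE Mstar := by
  intro EE Mstar
  have hK0 : (0:ℝ) < K := lt_of_lt_of_le one_pos hK
  have hT0 : (0:ℝ) < T := lt_trans hK0 hT
  have hS1 : 0 < ∑ i ∈ Finset.range 3, C1 i * K ^ i := by
    rw [Finset.sum_range_succ, Finset.sum_range_succ, Finset.sum_range_one]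
    nlinarith [mul_nonneg (hC1 1) (pow_nonneg hK0.le 1),
      mul_nonneg (hC1 2) (pow_nonneg hK0.le 2)]
  have hS0 : 0 ≤ ∑ i ∈ Finset.range 4, C0 i * K ^ i :=
    Finset.sum_nonneg fun i _ => mul_nonneg (hC0 i) (pow_nonneg hK0.le i)
  have ha : 0 < ρ * K * A / η + ∑ i ∈ Finset.range 4, C0 i * K ^ i :=
    add_pos_of_pos_of_nonneg (by positivity) hS0
  have hk : 0 < K * (1 - K / T) / Real.log 2 := by
    apply div_pos _ (Real.log_pos one_lt_two)
    have : K / T < 1 := (div_lt_one hT0).mpr hT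
    nlinarith
  have he : (0:ℝ) < Real.exp 1 := Real.exp_pos 1
  have hwgt : -1 < w := by
    rcases lt_or_eq_of_le hw2 with h | h
    · exact h
    · exfalso
      rw [← h] at hw1
      have hP : 0 < (ρ ^ 2 * K * A / η + ρ * ∑ i ∈ Finset.range 4, C0 i * K ^ i) /
          (Real.exp 1 * ∑ i ∈ Finset.range 3, C1 i * K ^ i) := by
        apply div_pos
        · have h1 : 0 < ρ ^ 2 * K * A / η := by positivity
          nlinarith [mul_nonneg hρ.le hS0]
        · exact mul_pos he hS1
      have h2 : (-1:ℝ) / Real.exp 1 < (K * ρ - 1) / Real.exp 1 := by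
        rw [div_lt_div_iff₀ he he]
        nlinarith [mul_pos (mul_pos hK0 hρ) he]
      have h3 : (-1:ℝ) * Real.exp (-1) = -1 / Real.exp 1 := by
        rw [Real.exp_neg]; ring
      linarith [hw1, hP, h2, h3]
  have hq : (∑ i ∈ Finset.range 3, C1 i * K ^ i) * w * Real.exp (w + 1) =
      ρ * (ρ * K * A / η + ∑ i ∈ Finset.range 4, C0 i * K ^ i) +
        (∑ i ∈ Finset.range 3, C1 i * K ^ i) * (K * ρ - 1) := by
    have hq' : ((∑ i ∈ Finset.range 3, C1 i * K ^ i) * w * Real.exp (w + 1)) * Real.exp 1 =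
        (ρ * (ρ * K * A / η + ∑ i ∈ Finset.range 4, C0 i * K ^ i) +
          (∑ i ∈ Finset.range 3, C1 i * K ^ i) * (K * ρ - 1)) * Real.exp 1 := by
      rw [Real.exp_add]
      field_simp at hw1 ⊢
      linear_combination hw1
    exact mul_right_cancel₀ he.ne' hq'
  have hEE : ∀ M : ℝ, EE M = (K * (1 - K / T) / Real.log 2) *
      (Real.log (1 + ρ * (M - K)) /
        ((ρ * K * A / η + ∑ i ∈ Finset.range 4, C0 i * K ^ i) +
          (∑ i ∈ Finset.range 3, C1 i * K ^ i) * M)) := fun M => by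
    simp only [EE, Real.logb]
    ring
  refine ⟨?_, ?_, ?_, ?_, ?_⟩
  · intro α
    have hset : {M : ℝ | K ≤ M ∧ α ≤ EE M} =
        {M : ℝ | K ≤ M ∧ α ≤ (K * (1 - K / T) / Real.log 2) *
          (Real.log (1 + ρ * (M - K)) /
            ((ρ * K * A / η + ∑ i ∈ Finset.range 4, C0 i * K ^ i) +
              (∑ i ∈ Finset.range 3, C1 i * K ^ i) * M))} := by
      ext M; simp only [Set.mem_setOf_eq, hEE]
    rw [hset]
    exact aux_convex _ _ _ _ _ ha hS1 hk hρ hK0 α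
  · simp only [EE]
    norm_num [Real.logb]
  · exact (aux_tendsto _ _ (K * (1 - K / T) / Real.log 2) _ _ ha hS1 hρ hK0).congr
      fun M => (hEE M).symm
  · simp only [Mstar]
    rw [le_div_iff₀ hρ]
    have h1 : 1 ≤ Real.exp (w + 1) := by
      calc (1:ℝ) = Real.exp 0 := Real.exp_zero.symm
        _ ≤ Real.exp (w + 1) := Real.exp_le_exp.mpr (by linarith)
    nlinarith
  · intro M hM hne
    simp only [Mstar] at hne
    rw [hEE M, hEE Mstar]
    simp only [Mstar]
    exact aux_max _ _ _ _ _ _ ha hS1 hk hρ hK0 hwgt hq M hM hne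
end

section
/- Fix M > K ≥ 1, T > K, A > 0, η ∈ (0,1], and circuit power P_c = Σ_{i=0}^{3} C_{i,0}K^i + Σ_{i=0}^{2} C_{i,1}K^i·M > 0. Define EE(ρ) = K(1-K/T)·log₂(1+ρ(M-K)) / (ρKA/η + P_c) for ρ ≥ 0. Then EE is strictly quasiconcave, equals 0 at ρ = 0, tends to 0 as ρ → ∞, and its unique maximizer is ρ* = (e^{W((M-K)ηP_c/(KAe) - 1/e)+1} - 1)/(M-K), which is strictly positive. -/
open Real Set Filter

theorem aux_unimodal (m b P w : ℝ) (hm : 0 < m) (hb : 0 < b) (hP : 0 < P)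
    (hw1 : w * Real.exp w = m * P / (b * Real.exp 1) - 1 / Real.exp 1)
    (hw2 : -1 ≤ w) :
    0 < (Real.exp (w+1) - 1) / m ∧
    StrictMonoOn (fun ρ => Real.log (1+m*ρ) / (b*ρ+P)) (Icc 0 ((Real.exp (w+1) - 1)/m)) ∧
    StrictAntiOn (fun ρ => Real.log (1+m*ρ) / (b*ρ+P)) (Ici ((Real.exp (w+1) - 1)/m)) ∧
    Tendsto (fun ρ => Real.log (1+m*ρ) / (b*ρ+P)) atTop (nhds 0) := by
  have he : (0:ℝ) < Real.exp 1 := Real.exp_pos 1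
  have hwgt : -1 < w := by
    rcases eq_or_lt_of_le hw2 with h | h
    · exfalso
      rw [← h, Real.exp_neg] at hw1
      have hmP : 0 < m * P / (b * Real.exp 1) := by positivity
      rw [one_div] at hw1
      nlinarith
    · exact h
  set ρs : ℝ := (Real.exp (w+1) - 1) / m with hρs
  have hu1 : (1:ℝ) < Real.exp (w+1) := by nlinarith [Real.add_one_le_exp (w+1)]
  have hρspos : 0 < ρs := div_pos (by linarith) hm
  have hmρs : m * ρs = Real.exp (w+1) - 1 := by
    rw [hρs]; field_simp
  have key : b * w * Real.exp (w+1) = m * P - b := by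
    rw [Real.exp_add]
    field_simp at hw1
    have h2 : (w * Real.exp w * (b * Real.exp 1)) * Real.exp 1
        = (m * P - b) * Real.exp 1 := by linear_combination (Real.exp 1) * hw1
    have h3 := mul_right_cancel₀ (ne_of_gt he) h2
    linear_combination h3
  -- basic positivity
  have hu : ∀ ρ : ℝ, 0 ≤ ρ → (0:ℝ) < 1 + m * ρ := fun ρ hρ => by nlinarith
  have hd : ∀ ρ : ℝ, 0 ≤ ρ → (0:ℝ) < b * ρ + P := fun ρ hρ => by nlinarith
  set F : ℝ → ℝ := fun ρ => Real.log (1+m*ρ) / (b*ρ+P) with hF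
  set h : ℝ → ℝ := fun ρ => m*(b*ρ+P) - b*((1+m*ρ) * Real.log (1+m*ρ)) with hhdef
  -- derivative of inner affine maps
  have hinner : ∀ ρ : ℝ, HasDerivAt (fun ρ : ℝ => 1 + m * ρ) m ρ := by
    intro ρ
    simpa using ((hasDerivAt_id ρ).const_mul m).const_add 1
  have hden : ∀ ρ : ℝ, HasDerivAt (fun ρ : ℝ => b * ρ + P) b ρ := by
    intro ρ
    simpa using ((hasDerivAt_id ρ).const_mul b).add_const P
  have hlog : ∀ ρ : ℝ, 0 < 1 + m * ρ →
      HasDerivAt (fun ρ : ℝ => Real.log (1 + m * ρ)) (m / (1 + m * ρ)) ρ := by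
    intro ρ hρ
    have := (Real.hasDerivAt_log (ne_of_gt hρ)).comp ρ (hinner ρ)
    exact this.congr_deriv (by rw [div_eq_inv_mul])
  have hhd : ∀ ρ : ℝ, 0 < 1 + m * ρ →
      HasDerivAt h (-(b * m * Real.log (1 + m * ρ))) ρ := by
    intro ρ hρ
    have h1 : HasDerivAt (fun ρ : ℝ => (1+m*ρ) * Real.log (1+m*ρ))
        (m * Real.log (1+m*ρ) + (1+m*ρ) * (m / (1+m*ρ))) ρ :=
      (hinner ρ).mul (hlog ρ hρ)
    have h2 := ((hden ρ).const_mul m).sub (h1.const_mul b)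
    refine h2.congr_deriv ?_
    field_simp
    ring
  have hFd : ∀ ρ : ℝ, 0 ≤ ρ →
      HasDerivAt F (h ρ / ((1 + m*ρ) * (b*ρ+P)^2)) ρ := by
    intro ρ hρ
    have h1 := (hlog ρ (hu ρ hρ)).div (hden ρ) (ne_of_gt (hd ρ hρ))
    refine h1.congr_deriv ?_
    rw [hhdef]
    field_simp
  -- h is strictly anti on Ici 0
  have hanti : StrictAntiOn h (Ici 0) := by
    apply strictAntiOn_of_deriv_neg (convex_Ici 0)
    · intro x hx
      exact (hhd x (hu x hx)).continuousAt.continuousWithinAt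
    · intro x hx
      rw [interior_Ici] at hx
      have hx' : (0:ℝ) < x := hx
      rw [(hhd x (hu x (le_of_lt hx'))).deriv]
      have hl : 0 < Real.log (1 + m * x) := Real.log_pos (by nlinarith)
      nlinarith [mul_pos (mul_pos hb hm) hl]
  -- h vanishes at ρs
  have hρs0 : h ρs = 0 := by
    have hlog1 : Real.log (1 + m * ρs) = w + 1 := by
      rw [show (1 : ℝ) + m * ρs = Real.exp (w+1) by rw [hmρs]; ring, Real.log_exp]
    rw [hhdef]
    simp only
    rw [hlog1, show (1 : ℝ) + m * ρs = Real.exp (w+1) by rw [hmρs]; ring]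
    have : m * (b * ρs) = b * (Real.exp (w+1) - 1) := by
      rw [show m * (b * ρs) = b * (m * ρs) by ring, hmρs]
    nlinarith [key]
  -- sign of h
  have hpos : ∀ x ∈ Ico (0:ℝ) ρs, 0 < h x := by
    intro x hx
    have := hanti (mem_Ici.2 hx.1) (mem_Ici.2 (le_of_lt hρspos)) hx.2
    rw [hρs0] at this; exact this
  have hneg : ∀ x ∈ Ioi ρs, h x < 0 := by
    intro x hx
    have := hanti (mem_Ici.2 (le_of_lt hρspos)) (mem_Ici.2 (le_of_lt (lt_trans hρspos hx))) hx
    rw [hρs0] at this; exact this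
  refine ⟨hρspos, ?_, ?_, ?_⟩
  · -- strict mono on Icc 0 ρs
    apply strictMonoOn_of_deriv_pos (convex_Icc 0 ρs)
    · intro x hx
      exact (hFd x hx.1).continuousAt.continuousWithinAt
    · intro x hx
      rw [interior_Icc] at hx
      rw [(hFd x (le_of_lt hx.1)).deriv]
      refine div_pos (hpos x ⟨le_of_lt hx.1, hx.2⟩) ?_
      have h1 := hu x (le_of_lt hx.1)
      have h2 := hd x (le_of_lt hx.1)
      positivity
  · -- strict anti on Ici ρs
    apply strictAntiOn_of_deriv_neg (convex_Ici ρs)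
    · intro x hx
      exact (hFd x (le_trans (le_of_lt hρspos) hx)).continuousAt.continuousWithinAt
    · intro x hx
      rw [interior_Ici] at hx
      have hx0 : (0:ℝ) ≤ x := le_of_lt (lt_trans hρspos hx)
      rw [(hFd x hx0).deriv]
      have h1 := hu x hx0
      have h2 := hd x hx0
      exact div_neg_of_neg_of_pos (hneg x hx) (by positivity)
  · -- tendsto 0
    have t1 : Tendsto (fun ρ : ℝ => 1 + m * ρ) atTop atTop := by
      apply tendsto_atTop_add_const_left
      exact Tendsto.const_mul_atTop hm tendsto_id
    have t2 : Tendsto (fun u : ℝ => Real.log u / u) atTop (nhds 0) :=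
      Real.isLittleO_log_id_atTop.tendsto_div_nhds_zero
    have t3 : Tendsto (fun ρ : ℝ => Real.log (1+m*ρ) / (1+m*ρ)) atTop (nhds 0) :=
      t2.comp t1
    have t4 : Tendsto (fun ρ : ℝ => (1+m*ρ) / (b*ρ+P)) atTop (nhds (m/b)) := by
      have num : Tendsto (fun ρ : ℝ => ρ⁻¹ + m) atTop (nhds (0 + m)) :=
        tendsto_inv_atTop_zero.add tendsto_const_nhds
      have den : Tendsto (fun ρ : ℝ => b + P * ρ⁻¹) atTop (nhds (b + P * 0)) :=
        tendsto_const_nhds.add (tendsto_const_nhds.mul tendsto_inv_atTop_zero)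
      have hlim := num.div den (by simpa using ne_of_gt hb)
      simp only [zero_add, mul_zero, add_zero, Pi.div_apply] at hlim
      apply hlim.congr'
      filter_upwards [eventually_gt_atTop 0] with ρ hρ
      rw [Pi.div_apply]
      field_simp
    have := t3.mul t4
    rw [zero_mul] at this
    apply this.congr'
    filter_upwards [eventually_gt_atTop 0] with ρ hρ
    have h1 := hu ρ (le_of_lt hρ)
    rw [hF]
    field_simp



/-- With `M > K ≥ 1`, `T > K`, `A > 0`, `η ∈ (0,1]`, and circuit power
`Pc = Σᵢ C0 i Kⁱ + (Σᵢ C1 i Kⁱ) M > 0`, the energy efficiency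
`EE ρ = K (1-K/T) log₂(1+ρ(M-K)) / (ρKA/η + Pc)` is strictly quasiconcave on
`[0,∞)`, equals 0 at `ρ = 0`, tends to 0 as `ρ → ∞`, and its unique maximizer is
`ρ* = (e^{W((M-K)ηPc/(KAe) - 1/e)+1} - 1)/(M-K)`, which is strictly positive. -/
theorem stmt_5 (M K T A η Pc : ℝ) (C0 : ℕ → ℝ) (C1 : ℕ → ℝ) (w : ℝ)
    (hK : 1 ≤ K) (hM : K < M) (hT : K < T) (hA : 0 < A) (hη : 0 < η) (hη1 : η ≤ 1)
    (hPc : Pc = (∑ i ∈ Finset.range 4, C0 i * K ^ i) +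
      (∑ i ∈ Finset.range 3, C1 i * K ^ i) * M)
    (hPcpos : 0 < Pc)
    (hw1 : w * Real.exp w =
      (M - K) * η * Pc / (K * A * Real.exp 1) - 1 / Real.exp 1)
    (hw2 : -1 ≤ w) :
    let EE : ℝ → ℝ := fun ρ =>
      K * (1 - K / T) * Real.logb 2 (1 + ρ * (M - K)) / (ρ * K * A / η + Pc)
    let ρstar : ℝ := (Real.exp (w + 1) - 1) / (M - K)
    (∀ α : ℝ, Convex ℝ {ρ : ℝ | 0 ≤ ρ ∧ α ≤ EE ρ}) ∧
      EE 0 = 0 ∧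
      Filter.Tendsto EE Filter.atTop (nhds 0) ∧
      0 < ρstar ∧
      ∀ ρ : ℝ, 0 ≤ ρ → ρ ≠ ρstar → EE ρ < EE ρstar := by
  intro EE ρstar
  have hK0 : (0:ℝ) < K := lt_of_lt_of_le one_pos hK
  have hm : (0:ℝ) < M - K := sub_pos.2 hM
  have hb : (0:ℝ) < K * A / η := by positivity
  have hw1' : w * Real.exp w = (M - K) * Pc / ((K * A / η) * Real.exp 1) - 1 / Real.exp 1 := by
    rw [hw1]
    congr 1
    field_simp
  obtain ⟨hρpos, hFmono, hFanti, hFtend⟩ :=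
    aux_unimodal (M - K) (K * A / η) Pc w hm hb hPcpos hw1' hw2
  have hc : (0:ℝ) < K * (1 - K / T) / Real.log 2 := by
    have h1 : (0:ℝ) < 1 - K / T := by
      rw [sub_pos]
      exact (div_lt_one (by linarith)).2 hT
    have h2 : (0:ℝ) < Real.log 2 := Real.log_pos (by norm_num)
    positivity
  have hEE : ∀ ρ : ℝ, EE ρ = (K * (1 - K / T) / Real.log 2) *
      (Real.log (1 + (M - K) * ρ) / ((K * A / η) * ρ + Pc)) := by
    intro ρ
    show K * (1 - K / T) * Real.logb 2 (1 + ρ * (M - K)) / (ρ * K * A / η + Pc) = _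
    have harg : (1:ℝ) + ρ * (M - K) = 1 + (M - K) * ρ := by ring
    rw [Real.logb, harg]
    ring
  have hEEmono : StrictMonoOn EE (Set.Icc 0 ρstar) := by
    intro x hx y hy hxy
    rw [hEE x, hEE y]
    exact mul_lt_mul_of_pos_left (hFmono hx hy hxy) hc
  have hEEanti : StrictAntiOn EE (Set.Ici ρstar) := by
    intro x hx y hy hxy
    rw [hEE x, hEE y]
    exact mul_lt_mul_of_pos_left (hFanti hx hy hxy) hc
  refine ⟨?_, ?_, ?_, hρpos, ?_⟩
  · intro α
    rw [convex_iff_ordConnected]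
    refine ⟨fun x hx y hy z hz => ⟨le_trans hx.1 hz.1, ?_⟩⟩
    rcases le_total z ρstar with hzρ | hzρ
    · exact le_trans hx.2 (hEEmono.monotoneOn ⟨hx.1, le_trans hz.1 hzρ⟩
        ⟨le_trans hx.1 hz.1, hzρ⟩ hz.1)
    · exact le_trans hy.2 (hEEanti.antitoneOn hzρ (le_trans hzρ hz.2) hz.2)
  · show K * (1 - K / T) * Real.logb 2 (1 + 0 * (M - K)) / (0 * K * A / η + Pc) = 0
    norm_num
  · have := hFtend.const_mul (K * (1 - K / T) / Real.log 2)
    rw [mul_zero] at this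
    exact this.congr fun ρ => (hEE ρ).symm
  · intro ρ hρ hne
    rcases lt_or_gt_of_ne hne with hlt | hgt
    · exact hEEmono ⟨hρ, le_of_lt hlt⟩ ⟨le_of_lt hρpos, le_refl _⟩ hlt
    · exact hEEanti (Set.self_mem_Ici) (le_of_lt hgt) hgt
end

section
/- Let ρ*(M) = (e^{W((M-K)·(C̃₀ + C̃₁M)/e - 1/e)+1} - 1)/(M-K) with constants C̃₀ ≥ 0, C̃₁ > 0 and K fixed. Then for all sufficiently large M, ρ*(M) ≥ [(C̃₀ + C̃₁M) - ln((M-K)(C̃₀+C̃₁M) - 1)/(M-K)] / [ln((M-K)(C̃₀+C̃₁M) - 1) - 1], and consequently ρ*(M) = Ω(M/ln M) as M → ∞. -/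
private lemma stmt6_aux (K C0 C1 M w : ℝ)
    (hC0 : 0 ≤ C0) (hC1 : 0 < C1)
    (hM3 : 3 ≤ M) (hMabsK : 2 * |K| ≤ M) (hMC : 2 * (C0 + C1) ≤ M)
    (hMe : (2 * Real.exp 2 + 24) / C1 ≤ M)
    (hwexp : w * Real.exp (w + 1) = (M - K) * (C0 + C1 * M) - 1) :
    ((C0 + C1 * M) - Real.log ((M - K) * (C0 + C1 * M) - 1) / (M - K)) /
        (Real.log ((M - K) * (C0 + C1 * M) - 1) - 1) ≤
      (Real.exp (w + 1) - 1) / (M - K) ∧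
    C1 / 48 * M / Real.log M ≤ (Real.exp (w + 1) - 1) / (M - K) := by
  have hM1 : (1 : ℝ) ≤ M := by linarith
  have hM0 : (0 : ℝ) < M := by linarith
  have hKabs1 := le_abs_self K
  have hKabs2 := neg_abs_le K
  have hMK : 0 < M - K := by linarith
  have hMKhalf : M / 2 ≤ M - K := by linarith
  have hMK2M : M - K ≤ 2 * M := by linarith
  have hC1Me : 2 * Real.exp 2 + 24 ≤ C1 * M := by
    rw [div_le_iff₀ hC1] at hMe; linarith
  have he2pos := Real.exp_pos 2
  have hC1M24 : 24 ≤ C1 * M := by linarith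
  have he2lt : Real.exp 2 < 8 := by
    have h1 : Real.exp 2 = Real.exp 1 * Real.exp 1 := by
      rw [← Real.exp_add]; norm_num
    have h2 := Real.exp_one_lt_d9
    nlinarith [Real.exp_pos 1]
  set A : ℝ := (M - K) * (C0 + C1 * M) - 1 with hAdef
  have hA1 : (M - K) * (C0 + C1 * M) = A + 1 := by rw [hAdef]; ring
  clear_value A
  have hCpos : 0 < C0 + C1 * M := by nlinarith
  have hprod : (M / 2) * (C1 * M) ≤ (M - K) * (C0 + C1 * M) :=
    mul_le_mul hMKhalf (by linarith) (mul_pos hC1 hM0).le (le_of_lt hMK)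
  have e1 : (M / 2) * (C1 * M) = C1 * M ^ 2 / 2 := by ring
  have h5 : 24 * M ≤ C1 * M * M := mul_le_mul_of_nonneg_right hC1M24 hM0.le
  have e2 : C1 * M * M = C1 * M ^ 2 := by ring
  have hM2big : 72 ≤ C1 * M ^ 2 := by nlinarith
  have hAlow : C1 * M ^ 2 / 4 ≤ A := by linarith
  have hAe2 : Real.exp 2 ≤ A := by linarith
  have hApos : 0 < A := by linarith
  have hAup : A ≤ M ^ 3 := by
    have hc : C0 + C1 * M ≤ (C0 + C1) * M := by
      nlinarith [mul_nonneg hC0 (by linarith : (0:ℝ) ≤ M - 1)]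
    have h1 : (M - K) * (C0 + C1 * M) ≤ (2 * M) * ((C0 + C1) * M) :=
      mul_le_mul hMK2M hc (le_of_lt hCpos) (by linarith)
    have h2 : (2 * (C0 + C1)) * M ^ 2 ≤ M * M ^ 2 :=
      mul_le_mul_of_nonneg_right hMC (by positivity)
    have e3 : (2 * M) * ((C0 + C1) * M) = (2 * (C0 + C1)) * M ^ 2 := by ring
    have e4 : M * M ^ 2 = M ^ 3 := by ring
    linarith
  -- facts about w
  have hwpos : 0 < w := by
    by_contra h
    push_neg at h
    have h2 : w * Real.exp (w + 1) ≤ 0 :=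
      mul_nonpos_of_nonpos_of_nonneg h (Real.exp_pos (w + 1)).le
    linarith
  have hw1 : 1 ≤ w := by
    by_contra h
    push_neg at h
    have h3 : Real.exp (w + 1) < Real.exp 2 := Real.exp_lt_exp.2 (by linarith)
    have h4 : w * Real.exp (w + 1) < 1 * Real.exp (w + 1) :=
      mul_lt_mul_of_pos_right h (Real.exp_pos (w + 1))
    linarith
  have hexpA : Real.exp (w + 1) = A / w := by
    rw [eq_div_iff (ne_of_gt hwpos)]
    linear_combination hwexp
  have hlogA : w + 1 ≤ Real.log A := by
    rw [Real.le_log_iff_exp_le hApos]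
    have h4 : 1 * Real.exp (w + 1) ≤ w * Real.exp (w + 1) :=
      mul_le_mul_of_nonneg_right hw1 (Real.exp_pos (w + 1)).le
    linarith
  have hL : w ≤ Real.log A - 1 := by linarith
  have hLpos : 0 < Real.log A - 1 := by linarith
  have hlogM : 0 < Real.log M := Real.log_pos (by linarith)
  have hlogA3 : Real.log A ≤ 3 * Real.log M := by
    have h1 : Real.log A ≤ Real.log (M ^ 3) := Real.log_le_log hApos hAup
    rwa [Real.log_pow, Nat.cast_ofNat] at h1
  have hw3log : w ≤ 3 * Real.log M := by linarith
  rw [hexpA]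
  constructor
  · rw [div_le_div_iff₀ hLpos hMK]
    have e5 : ((C0 + C1 * M) - Real.log A / (M - K)) * (M - K) = A + 1 - Real.log A := by
      field_simp
      linear_combination hA1
    have h1 : A / (Real.log A - 1) ≤ A / w :=
      div_le_div_of_nonneg_left hApos.le hwpos hL
    have h2 : (A / (Real.log A - 1) - 1) * (Real.log A - 1) ≤
        (A / w - 1) * (Real.log A - 1) :=
      mul_le_mul_of_nonneg_right (by linarith) hLpos.le
    have e6 : (A / (Real.log A - 1) - 1) * (Real.log A - 1) = A - (Real.log A - 1) := by
      field_simp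
    linarith
  · rw [div_le_div_iff₀ hlogM hMK]
    have h1 : A / (3 * Real.log M) ≤ A / w :=
      div_le_div_of_nonneg_left hApos.le hwpos hw3log
    have h2 : A / (3 * Real.log M) * Real.log M = A / 3 := by
      field_simp
    have h3 : A / (3 * Real.log M) * Real.log M ≤ A / w * Real.log M :=
      mul_le_mul_of_nonneg_right h1 hlogM.le
    have h4 : A / 3 ≤ A / w * Real.log M := by rw [← h2]; exact h3
    have hlogMM : Real.log M ≤ M - 1 := Real.log_le_sub_one_of_pos hM0
    have h6 : C1 / 48 * M * (M - K) ≤ C1 / 48 * M * (2 * M) :=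
      mul_le_mul_of_nonneg_left hMK2M (by positivity)
    have e7 : C1 / 48 * M * (2 * M) = C1 * M ^ 2 / 24 := by ring
    have e8 : (A / w - 1) * Real.log M = A / w * Real.log M - Real.log M := by ring
    linarith

/-- For `ρ*(M) = (e^{W((M-K)(C̃₀+C̃₁M)/e - 1/e)+1} - 1)/(M-K)` with
`C̃₀ ≥ 0`, `C̃₁ > 0` and `K` fixed, where `W` is the principal Lambert W branch
(characterized on `[-1/e, ∞)` by `W(x)e^{W(x)} = x` and `W(x) ≥ -1`): for all
sufficiently large `M` the stated lower bound holds, and consequently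
`ρ*(M) = Ω(M / ln M)`. -/
theorem stmt_6 (K C0 C1 : ℝ) (W : ℝ → ℝ)
    (hC0 : 0 ≤ C0) (hC1 : 0 < C1)
    (hW : ∀ x ≥ -(1 / Real.exp 1), W x * Real.exp (W x) = x ∧ -1 ≤ W x) :
    let ρstar : ℝ → ℝ := fun M =>
      (Real.exp (W ((M - K) * (C0 + C1 * M) / Real.exp 1 - 1 / Real.exp 1) + 1) - 1) /
        (M - K)
    (∃ M₀ : ℝ, ∀ M ≥ M₀,
        ρstar M ≥
          ((C0 + C1 * M) - Real.log ((M - K) * (C0 + C1 * M) - 1) / (M - K)) /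
            (Real.log ((M - K) * (C0 + C1 * M) - 1) - 1)) ∧
      ∃ c > (0 : ℝ), ∃ M₁ : ℝ, ∀ M ≥ M₁, ρstar M ≥ c * M / Real.log M := by
  intro ρstar
  have main : ∀ M, max 3 (max (2 * |K|) (max (2 * (C0 + C1)) ((2 * Real.exp 2 + 24) / C1))) ≤ M →
      (ρstar M ≥
          ((C0 + C1 * M) - Real.log ((M - K) * (C0 + C1 * M) - 1) / (M - K)) /
            (Real.log ((M - K) * (C0 + C1 * M) - 1) - 1)) ∧
      ρstar M ≥ C1 / 48 * M / Real.log M := by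
    intro M hM
    have hM3 : (3 : ℝ) ≤ M := le_trans (le_max_left _ _) hM
    have hMabsK : 2 * |K| ≤ M := le_trans (le_trans (le_max_left _ _) (le_max_right _ _)) hM
    have hMC : 2 * (C0 + C1) ≤ M :=
      le_trans (le_trans (le_trans (le_max_left _ _) (le_max_right _ _)) (le_max_right _ _)) hM
    have hMe : (2 * Real.exp 2 + 24) / C1 ≤ M :=
      le_trans (le_trans (le_trans (le_max_right _ _) (le_max_right _ _)) (le_max_right _ _)) hM
    have hM0 : (0 : ℝ) < M := by linarith
    have hKabs1 := le_abs_self K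
    have hMK : (0:ℝ) ≤ M - K := by linarith
    have hCpos : (0:ℝ) ≤ C0 + C1 * M := by nlinarith [mul_pos hC1 hM0]
    have hxge : (M - K) * (C0 + C1 * M) / Real.exp 1 - 1 / Real.exp 1 ≥ -(1 / Real.exp 1) := by
      have h1 : 0 ≤ (M - K) * (C0 + C1 * M) / Real.exp 1 := by
        apply div_nonneg (mul_nonneg hMK hCpos) (Real.exp_pos 1).le
      linarith
    obtain ⟨hWx, hWge⟩ := hW _ hxge
    have hwexp : W ((M - K) * (C0 + C1 * M) / Real.exp 1 - 1 / Real.exp 1) *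
        Real.exp (W ((M - K) * (C0 + C1 * M) / Real.exp 1 - 1 / Real.exp 1) + 1) =
        (M - K) * (C0 + C1 * M) - 1 := by
      rw [Real.exp_add, ← mul_assoc, hWx]
      field_simp
    have h := stmt6_aux K C0 C1 M _ hC0 hC1 hM3 hMabsK hMC hMe hwexp
    exact ⟨h.1, h.2⟩
  exact ⟨⟨_, fun M hM => (main M hM).1⟩, C1 / 48, by positivity, _,
    fun M hM => (main M hM).2⟩
end

section
/- The optimal K* = √((bc₀/s)² + c₀a/s) - bc₀/s, where s = ac₂ + bc₁, is a strictly decreasing function of s for fixed a, b, c₀ > 0, and a strictly increasing function of c₀ for fixed a, b, s > 0. -/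
private lemma g_anti (a b : ℝ) (ha : 0 < a) (hb : 0 < b) :
    StrictAntiOn (fun x : ℝ => a / (Real.sqrt (b ^ 2 + a * x) + b)) (Set.Ioi 0) := by
  intro x hx y hy hxy
  simp only [Set.mem_Ioi] at hx hy
  have h1 : Real.sqrt (b ^ 2 + a * x) < Real.sqrt (b ^ 2 + a * y) := by
    apply Real.sqrt_lt_sqrt (by positivity)
    nlinarith
  have h2 : 0 < Real.sqrt (b ^ 2 + a * x) + b := by positivity
  exact div_lt_div_of_pos_left ha h2 (by linarith)

private lemma keq (a b s c0 : ℝ) (ha : 0 < a) (hb : 0 < b) (hs : 0 < s) (hc : 0 < c0) :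
    Real.sqrt ((b * c0 / s) ^ 2 + c0 * a / s) - b * c0 / s
      = a / (Real.sqrt (b ^ 2 + a * (s / c0)) + b) := by
  have h1 : (b * c0 / s) ^ 2 + c0 * a / s = (c0 / s) ^ 2 * (b ^ 2 + a * (s / c0)) := by
    field_simp
  have h2 : Real.sqrt ((b * c0 / s) ^ 2 + c0 * a / s)
      = (c0 / s) * Real.sqrt (b ^ 2 + a * (s / c0)) := by
    rw [h1, Real.sqrt_mul (by positivity), Real.sqrt_sq (le_of_lt (div_pos hc hs))]
  have hu : (0:ℝ) ≤ b ^ 2 + a * (s / c0) := by positivity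
  have h3 : Real.sqrt (b ^ 2 + a * (s / c0)) ^ 2 = b ^ 2 + a * (s / c0) := Real.sq_sqrt hu
  have hd : 0 < Real.sqrt (b ^ 2 + a * (s / c0)) + b := by positivity
  rw [h2, eq_div_iff (ne_of_gt hd)]
  set u := Real.sqrt (b ^ 2 + a * (s / c0)) with hu'
  have hs' : s ≠ 0 := ne_of_gt hs
  have hc' : c0 ≠ 0 := ne_of_gt hc
  have h4 : u ^ 2 * c0 = b ^ 2 * c0 + a * s := by rw [h3]; field_simp
  field_simp
  linear_combination h4

/-- `K*(s, c₀) = √((bc₀/s)² + c₀a/s) - bc₀/s` is strictly decreasing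
in `s > 0` for fixed `a, b, c₀ > 0`, and strictly increasing in `c₀ > 0` for fixed
`a, b, s > 0`. -/
theorem stmt_11 (a b : ℝ) (ha : 0 < a) (hb : 0 < b) :
    (∀ c0 : ℝ, 0 < c0 →
      StrictAntiOn (fun s : ℝ =>
        Real.sqrt ((b * c0 / s) ^ 2 + c0 * a / s) - b * c0 / s) (Set.Ioi 0)) ∧
    (∀ s : ℝ, 0 < s →
      StrictMonoOn (fun c0 : ℝ =>
        Real.sqrt ((b * c0 / s) ^ 2 + c0 * a / s) - b * c0 / s) (Set.Ioi 0)) := by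
  constructor
  · intro c0 hc s1 hs1 s2 hs2 h12
    simp only [Set.mem_Ioi] at hs1 hs2
    show _ < _
    simp only []
    rw [keq a b s1 c0 ha hb hs1 hc, keq a b s2 c0 ha hb hs2 hc]
    exact g_anti a b ha hb (Set.mem_Ioi.mpr (div_pos hs1 hc))
      (Set.mem_Ioi.mpr (div_pos hs2 hc)) (by apply div_lt_div_of_pos_right h12 hc)
  · intro s hs c1 hc1 c2 hc2 h12
    simp only [Set.mem_Ioi] at hc1 hc2
    show _ < _
    simp only []
    rw [keq a b s c1 ha hb hs hc1, keq a b s c2 ha hb hs hc2]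
    exact g_anti a b ha hb (Set.mem_Ioi.mpr (div_pos hs hc2))
      (Set.mem_Ioi.mpr (div_pos hs hc1))
      (div_lt_div_of_pos_left hs hc1 h12)
end
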